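/- Let A be a unital C*-algebra (or abstractly, suppose Div_m-type numbers are defined from an ordered semigroup with compact unit u). If Div_*(A) := liminf_{m→∞} Div_m(A)/m is finite and at least 1, then for every integer m ≥ 2, Div_m(A) ≤ m·Div_*(A) + 1. -/

import Mathlib

open scoped ENNReal

/-- `x` is way below `y`: whenever `y` is the supremum of an increasing sequence,
`x` is dominated by some term of the sequence. -/
def WayBelow {S : Type*} [Preorder S] (x y : S) : Prop :=
  ∀ f : ℕ → S, Monotone f → IsLUB (Set.range f) y → ∃ i, x ≤ f i

/-- `CuDiv u m` is the least `n` such that there is `x` with `m • x ≤ u ≤ n • x`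
(`∞` if no such `n` exists), viewed in `ℝ≥0∞`. -/
noncomputable def CuDiv {S : Type*} [AddCommMonoid S] [PartialOrder S] [IsOrderedAddMonoid S] (u : S) (m : ℕ) : ℝ≥0∞ :=
  sInf ((fun n : ℕ => (n : ℝ≥0∞)) '' {n : ℕ | ∃ x : S, m • x ≤ u ∧ u ≤ n • x})

/-- `CuDivStar u = liminf_{m → ∞} CuDiv u m / m`. -/
noncomputable def CuDivStar {S : Type*} [AddCommMonoid S] [PartialOrder S] [IsOrderedAddMonoid S] (u : S) : ℝ≥0∞ :=
  Filter.liminf (fun m : ℕ => CuDiv u m / (m : ℝ≥0∞)) Filter.atTop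

private lemma cudiv_le_of_witness {S : Type*} [AddCommMonoid S] [PartialOrder S] [IsOrderedAddMonoid S] {u : S} {m n : ℕ}
    (h : ∃ x : S, m • x ≤ u ∧ u ≤ n • x) : CuDiv u m ≤ n :=
  sInf_le ⟨n, h, rfl⟩

/-- Key semigroup step: from a witness for level `k`, get a witness for level `m`
with constant `N / (k/m) + 1`. -/
private lemma cudiv_key {S : Type*} [AddCommMonoid S] [PartialOrder S] [IsOrderedAddMonoid S] (hpos : ∀ s : S, 0 ≤ s)
    {u : S} {m k N : ℕ} (hm : 0 < m) (hk : m ≤ k)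
    (x : S) (hx1 : k • x ≤ u) (hx2 : u ≤ N • x) :
    CuDiv u m ≤ ((N / (k / m) + 1 : ℕ) : ℝ≥0∞) := by
  set r := k / m with hr
  have hr0 : 0 < r := Nat.one_le_div_iff hm |>.mpr hk
  refine cudiv_le_of_witness ⟨r • x, ?_, ?_⟩
  · calc m • r • x = (r * m) • x := (mul_nsmul x r m).symm
      _ ≤ k • x := nsmul_le_nsmul_left (hpos x) (Nat.div_mul_le_self k m)
      _ ≤ u := hx1
  · have hN : N ≤ r * (N / r + 1) := by
      calc N = r * (N / r) + N % r := (Nat.div_add_mod N r).symm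
        _ ≤ r * (N / r) + r := by
            exact Nat.add_le_add_left (Nat.mod_lt N hr0).le _
        _ = r * (N / r + 1) := by ring
    calc u ≤ N • x := hx2
      _ ≤ (r * (N / r + 1)) • x := nsmul_le_nsmul_left (hpos x) hN
      _ = (N / r + 1) • r • x := mul_nsmul x r (N / r + 1)

/-- if `Div_*(u)` is finite and at least `1`, then for every `m ≥ 2`,
`Div_m(u) ≤ m • Div_*(u) + 1`. -/
theorem div_le_mul_divStar_add_one {S : Type*} [AddCommMonoid S] [PartialOrder S] [IsOrderedAddMonoid S]
    (hpos : ∀ s : S, 0 ≤ s)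
    (u : S) (hu : WayBelow u u)
    (h1 : 1 ≤ CuDivStar u) (hfin : CuDivStar u < ⊤) :
    ∀ m : ℕ, 2 ≤ m → CuDiv u m ≤ (m : ℝ≥0∞) * CuDivStar u + 1 := by
  intro m hm
  set L := CuDivStar u with hLdef
  have hm0 : (m : ℝ≥0∞) ≠ 0 := Nat.cast_ne_zero.mpr (by omega)
  have hmtop : (m : ℝ≥0∞) ≠ ∞ := ENNReal.natCast_ne_top m
  refine ENNReal.le_of_forall_pos_le_add fun ε hε _ => ?_
  have hε0 : (ε : ℝ≥0∞) ≠ 0 := by exact_mod_cast hε.ne'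
  have hεtop : (ε : ℝ≥0∞) ≠ ∞ := ENNReal.coe_ne_top
  -- the "small" perturbation of the liminf
  set ε1 : ℝ≥0∞ := (ε : ℝ≥0∞) / 2 / m with hε1def
  have hε1pos : ε1 ≠ 0 := by
    rw [hε1def]
    exact (ENNReal.div_pos (ENNReal.div_pos hε0 (by norm_num)).ne' hmtop).ne'
  have hC : L + ε1 ≠ ∞ := by
    refine ENNReal.add_ne_top.mpr ⟨hfin.ne, ?_⟩
    rw [hε1def]
    exact (ENNReal.div_lt_top (ENNReal.div_lt_top hεtop (by norm_num)).ne hm0).ne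
  -- frequently, `CuDiv u k / k < L + ε1`
  have hfreq : ∃ᶠ k in Filter.atTop, CuDiv u k / (k : ℝ≥0∞) < L + ε1 :=
    Filter.frequently_lt_of_liminf_lt (by isBoundedDefault)
      (ENNReal.lt_add_right hfin.ne hε1pos)
  -- choose a large threshold R
  set C : ℝ≥0∞ := (L + ε1) * m with hCdef
  have hCtop : C ≠ ∞ := ENNReal.mul_ne_top hC hmtop
  obtain ⟨R, hR⟩ : ∃ R : ℕ, C * 2 / ε < R :=
    ENNReal.exists_nat_gt
      ((ENNReal.div_lt_top (ENNReal.mul_ne_top hCtop (by norm_num)) hε0).ne)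
  -- pick a frequent k beyond (R+1)*m
  obtain ⟨k, hkK, hklt⟩ := Filter.frequently_atTop.mp hfreq ((R + 1) * m)
  have hmk : m ≤ k := le_trans (by nlinarith) hkK
  set r := k / m with hrdef
  have hrR : R + 1 ≤ r := by
    have h1' : ((R + 1) * m) / m ≤ k / m := Nat.div_le_div_right hkK
    rwa [Nat.mul_div_cancel _ (by omega)] at h1'
  have hr0 : 0 < r := by omega
  have hrc0 : (r : ℝ≥0∞) ≠ 0 := Nat.cast_ne_zero.mpr hr0.ne'
  have hrctop : (r : ℝ≥0∞) ≠ ∞ := ENNReal.natCast_ne_top r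
  have hk0 : (k : ℝ≥0∞) ≠ 0 := Nat.cast_ne_zero.mpr (by omega)
  -- turn the frequent inequality into a bound on CuDiv u k
  have hklt' : CuDiv u k < (L + ε1) * k :=
    (ENNReal.div_lt_iff (Or.inl hk0) (Or.inl (ENNReal.natCast_ne_top k))).mp hklt
  -- obtain a witness N
  obtain ⟨N, hNw, hNlt⟩ :
      ∃ N : ℕ, (∃ x : S, k • x ≤ u ∧ u ≤ N • x) ∧ (N : ℝ≥0∞) < (L + ε1) * k := by
    by_contra hcon
    push_neg at hcon
    refine absurd hklt' (not_lt.mpr (le_sInf ?_))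
    rintro b ⟨N, hN, rfl⟩
    exact hcon N hN
  obtain ⟨x, hx1, hx2⟩ := hNw
  -- key inequality
  have hkey : CuDiv u m ≤ ((N / r + 1 : ℕ) : ℝ≥0∞) :=
    cudiv_key hpos (by omega) hmk x hx1 hx2
  -- now estimate the right-hand side
  have hstep1 : ((N / r : ℕ) : ℝ≥0∞) ≤ (N : ℝ≥0∞) / r := by
    rw [ENNReal.le_div_iff_mul_le (Or.inl hrc0) (Or.inl hrctop)]
    exact_mod_cast Nat.div_mul_le_self N r
  have hstep2 : (N : ℝ≥0∞) / r ≤ (L + ε1) * k / r := ENNReal.div_le_div_right hNlt.le _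
  have hkr : (k : ℝ≥0∞) / r ≤ (m : ℝ≥0∞) + (m : ℝ≥0∞) / r := by
    have hkle : k ≤ (r + 1) * m := by
      have h1' := Nat.div_add_mod k m
      have h2' : k % m < m := Nat.mod_lt k (by omega)
      calc k = m * (k / m) + k % m := h1'.symm
        _ ≤ m * r + m := by rw [← hrdef]; omega
        _ = (r + 1) * m := by ring
    calc (k : ℝ≥0∞) / r ≤ ((r : ℝ≥0∞) * m + m) / r := by
          gcongr
          have : ((r + 1) * m : ℕ) = ((r : ℝ≥0∞) * m + m) := by push_cast; ring
          exact_mod_cast Nat.cast_le.mpr hkle |>.trans_eq this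
      _ = (r : ℝ≥0∞) * m / r + (m : ℝ≥0∞) / r := ENNReal.add_div
      _ = (m : ℝ≥0∞) + (m : ℝ≥0∞) / r := by
          congr 1
          rw [mul_comm (r : ℝ≥0∞) (m : ℝ≥0∞), mul_div_assoc,
            ENNReal.div_self hrc0 hrctop, mul_one]
  have hstep3 : (L + ε1) * k / r ≤ (m : ℝ≥0∞) * (L + ε1) + C / r := by
    rw [mul_div_assoc]
    calc (L + ε1) * ((k : ℝ≥0∞) / r) ≤ (L + ε1) * ((m : ℝ≥0∞) + (m : ℝ≥0∞) / r) := by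
          gcongr
      _ = (m : ℝ≥0∞) * (L + ε1) + C / r := by
          rw [mul_add, mul_comm (L + ε1) (m : ℝ≥0∞), hCdef, mul_div_assoc]
  -- the tail `C / r` is at most `ε / 2`
  have htail : C / (r : ℝ≥0∞) ≤ (ε : ℝ≥0∞) / 2 := by
    have hRr : C * 2 / ε ≤ (r : ℝ≥0∞) := by
      refine hR.le.trans ?_
      exact_mod_cast Nat.cast_le.mpr (by omega : R ≤ r)
    have h2 : C * 2 ≤ (r : ℝ≥0∞) * ε :=
      (ENNReal.div_le_iff_le_mul (Or.inl hε0) (Or.inl hεtop)).mp hRr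
    rw [ENNReal.div_le_iff_le_mul (Or.inl hrc0) (Or.inl hrctop)]
    calc C = C * 2 / 2 := by
          rw [mul_div_assoc, ENNReal.div_self (by norm_num) (by norm_num), mul_one]
      _ ≤ (r : ℝ≥0∞) * ε / 2 := ENNReal.div_le_div_right h2 _
      _ = (ε : ℝ≥0∞) / 2 * r := by
          rw [div_eq_mul_inv, div_eq_mul_inv]; ring
  -- `m * ε1 = ε / 2`
  have hmε1 : (m : ℝ≥0∞) * ε1 = (ε : ℝ≥0∞) / 2 := by
    rw [hε1def]
    exact ENNReal.mul_div_cancel hm0 hmtop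
  -- put everything together
  calc CuDiv u m ≤ ((N / r + 1 : ℕ) : ℝ≥0∞) := hkey
    _ = ((N / r : ℕ) : ℝ≥0∞) + 1 := by push_cast; ring
    _ ≤ (L + ε1) * k / r + 1 := add_le_add_left (hstep1.trans hstep2) 1
    _ ≤ ((m : ℝ≥0∞) * (L + ε1) + C / r) + 1 := add_le_add_left hstep3 1
    _ = (m : ℝ≥0∞) * L + ((m : ℝ≥0∞) * ε1 + C / r) + 1 := by ring
    _ ≤ (m : ℝ≥0∞) * L + ((ε : ℝ≥0∞) / 2 + (ε : ℝ≥0∞) / 2) + 1 := by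
        exact add_le_add_left (add_le_add_right (add_le_add hmε1.le htail) _) 1
    _ = (m : ℝ≥0∞) * L + 1 + ε := by rw [ENNReal.add_halves]; ring
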